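/- For any real b < d and σ > 0, the integral over all real t of Φ((t−b)/σ)·Φ((d−t)/σ) dt equals (d−b)·Φ((d−b)/(√2·σ)) + √2·σ·φ((d−b)/(√2·σ)). -/

import Mathlib

open MeasureTheory Real Filter Set
open scoped ENNReal

noncomputable def phi (t : ℝ) : ℝ := Real.exp (-t^2/2) / Real.sqrt (2*Real.pi)

noncomputable def Phi (x : ℝ) : ℝ := ∫ s in Set.Iic x, phi s

noncomputable def k (r : ℝ) : ℝ≥0∞ := ENNReal.ofReal (phi r)




lemma phi_nonneg (t : ℝ) : 0 ≤ phi t :=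
  div_nonneg (Real.exp_pos _).le (Real.sqrt_nonneg _)

lemma phi_continuous : Continuous phi := by
  unfold phi; fun_prop

lemma integrable_phi : Integrable phi := by
  have h : phi = fun t => (Real.exp (-(1/2 : ℝ) * t^2)) * (Real.sqrt (2*Real.pi))⁻¹ := by
    funext t; unfold phi; ring_nf
  rw [h]
  exact (integrable_exp_neg_mul_sq (by norm_num)).mul_const _

lemma hasDerivAt_phi (t : ℝ) : HasDerivAt phi (-t * phi t) t := by
  have h1 : HasDerivAt (fun t : ℝ => -t^2/2) (-t) t := by
    have h := ((hasDerivAt_pow 2 t).neg).div_const 2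
    norm_num at h
    exact h.congr_deriv (by ring)
  have h2 := (h1.exp).div_const (Real.sqrt (2*Real.pi))
  have he : phi = fun t : ℝ => Real.exp (-t^2/2) / Real.sqrt (2*Real.pi) := rfl
  rw [he]
  exact h2.congr_deriv (by simp only; ring)

lemma phi_tendsto_atBot : Tendsto phi atBot (nhds 0) := by
  have h1 : Tendsto (fun t : ℝ => -t^2/2) atBot atBot := by
    have h2 : Tendsto (fun t : ℝ => t^2) atBot atTop := by
      have h3 := (tendsto_pow_atTop (n := 2) two_ne_zero).comp (tendsto_neg_atBot_atTop : Tendsto (fun t : ℝ => -t) atBot atTop)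
      refine h3.congr fun t => ?_
      simp [Function.comp]
    have h4 := tendsto_neg_atTop_atBot.comp h2
    have h5 : Tendsto (fun t : ℝ => -t^2) atBot atBot := h4.congr fun t => by simp [Function.comp]
    exact h5.atBot_div_const (by norm_num)
  have := (Real.tendsto_exp_atBot.comp h1).div_const (Real.sqrt (2*Real.pi))
  rw [zero_div] at this
  refine this.congr fun t => ?_
  simp [Function.comp, phi]


lemma phi_comp_div_sqrt_two (z : ℝ) :
    phi (z / Real.sqrt 2) = Real.exp (-z^2/4) / Real.sqrt (2*Real.pi) := by
  have h : (z / Real.sqrt 2)^2 = z^2/2 := by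
    rw [div_pow, Real.sq_sqrt (by norm_num : (0:ℝ) ≤ 2)]
  simp only [phi, h]
  ring_nf

lemma integral_phi_mul_phi (z : ℝ) :
    ∫ x : ℝ, phi x * phi (z - x) = phi (z / Real.sqrt 2) / Real.sqrt 2 := by
  have hrw : ∀ x : ℝ, phi x * phi (z - x)
      = (Real.exp (-z^2/4) / (2*Real.pi)) * Real.exp (-((x - z/2)^2)) := by
    intro x
    calc phi x * phi (z-x)
        = Real.exp (-x^2/2 + -(z-x)^2/2) / (2*Real.pi) := by
          simp only [phi]
          rw [div_mul_div_comm, ← Real.exp_add, Real.mul_self_sqrt (by positivity)]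
      _ = (Real.exp (-z^2/4) / (2*Real.pi)) * Real.exp (-((x - z/2)^2)) := by
          rw [show (-x^2/2 + -(z-x)^2/2) = -z^2/4 + -((x-z/2)^2) by ring, Real.exp_add]
          ring
  simp only [hrw]
  rw [integral_const_mul]
  have h1 : ∫ x : ℝ, Real.exp (-((x - z/2)^2)) = Real.sqrt Real.pi := by
    rw [integral_sub_right_eq_self (fun u : ℝ => Real.exp (-(u^2))) (z/2)]
    have := integral_gaussian 1
    simp only [one_mul, neg_mul] at this
    rw [this, div_one]
  rw [h1, phi_comp_div_sqrt_two]
  have hπ : Real.sqrt (2*Real.pi) = Real.sqrt 2 * Real.sqrt Real.pi :=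
    Real.sqrt_mul (by norm_num) _
  have hpp : Real.sqrt Real.pi * Real.sqrt Real.pi = Real.pi := Real.mul_self_sqrt Real.pi_pos.le
  have h2 : Real.sqrt Real.pi ≠ 0 := by positivity
  have h3 : Real.sqrt 2 ≠ 0 := by positivity
  have h22 : Real.sqrt 2 * Real.sqrt 2 = 2 := Real.mul_self_sqrt (by norm_num)
  rw [hπ]
  field_simp
  linear_combination Real.sqrt 2 * Real.sqrt 2 * hpp + Real.pi * h22

lemma Phi_nonneg (x : ℝ) : 0 ≤ Phi x :=
  setIntegral_nonneg measurableSet_Iic (fun t _ => phi_nonneg t)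

lemma Phi_monotone : Monotone Phi := fun x y hxy =>
  setIntegral_mono_set integrable_phi.integrableOn
    (Eventually.of_forall fun t => phi_nonneg t)
    (HasSubset.Subset.eventuallyLE (Iic_subset_Iic.mpr hxy))

lemma Phi_measurable : Measurable Phi := Phi_monotone.measurable

lemma Phi_tendsto_atBot : Tendsto Phi atBot (nhds 0) := by
  have h : Phi = fun x => ∫ t, (Set.Iic x).indicator phi t := by
    funext x; rw [Phi, integral_indicator measurableSet_Iic]
  rw [h]
  have h0 : (0:ℝ) = ∫ t : ℝ, (0:ℝ) := by simp
  rw [h0]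
  apply tendsto_integral_filter_of_dominated_convergence phi
  · exact Eventually.of_forall fun x =>
      (phi_continuous.aestronglyMeasurable).indicator measurableSet_Iic
  · refine Eventually.of_forall fun x => Eventually.of_forall fun t => ?_
    rw [Real.norm_eq_abs, abs_of_nonneg (Set.indicator_nonneg (fun s _ => phi_nonneg s) t)]
    exact Set.indicator_le_self' (fun s _ => phi_nonneg s) t
  · exact integrable_phi
  · refine Eventually.of_forall fun t => ?_
    have : ∀ᶠ x in atBot, (Set.Iic x).indicator phi t = 0 := by
      filter_upwards [eventually_lt_atBot t] with x hx
      exact Set.indicator_of_notMem (by simpa using hx.not_ge) phi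
    exact Tendsto.congr' (this.mono fun x hx => hx.symm) tendsto_const_nhds

lemma hasDerivAt_Phi (x : ℝ) : HasDerivAt Phi (phi x) x := by
  have key : ∀ y : ℝ, Phi y = Phi 0 + ∫ t in (0:ℝ)..y, phi t := by
    intro y
    rw [Phi, Phi]
    rw [← intervalIntegral.integral_Iic_sub_Iic integrable_phi.integrableOn integrable_phi.integrableOn]
    ring
  have h1 : HasDerivAt (fun y : ℝ => Phi 0 + ∫ t in (0:ℝ)..y, phi t) (phi x) x := by
    refine (HasDerivAt.const_add _ ?_)
    exact intervalIntegral.integral_hasDerivAt_right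
      (integrable_phi.intervalIntegrable)
      (phi_continuous.stronglyMeasurableAtFilter _ _)
      phi_continuous.continuousAt
  exact h1.congr_of_eventuallyEq (Eventually.of_forall key)


lemma k_meas : Measurable k := ENNReal.measurable_ofReal.comp phi_continuous.measurable

lemma ofReal_Phi (x : ℝ) : ENNReal.ofReal (Phi x) = ∫⁻ s in Set.Iic x, k s :=
  ofReal_integral_eq_lintegral_ofReal integrable_phi.integrableOn
    (Eventually.of_forall fun t => phi_nonneg t)

lemma integrable_phi_mul (z : ℝ) : Integrable (fun x => phi x * phi (z - x)) := by
  have : Integrable (fun x : ℝ => phi (z - x)) := by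
    have h := integrable_phi.comp_sub_left z   -- fun x => phi (z - x) ?
    exact h
  apply Integrable.bdd_mul this (phi_continuous.aestronglyMeasurable)
  refine Eventually.of_forall (p := fun x => ‖phi x‖ ≤ (Real.sqrt (2*Real.pi))⁻¹) fun x => ?_
  rw [Real.norm_eq_abs, abs_of_nonneg (phi_nonneg x)]
  rw [phi, div_eq_mul_inv]
  have h1 : Real.exp (-x^2/2) ≤ 1 := by
    rw [Real.exp_le_one_iff]; nlinarith [sq_nonneg x]
  have h2 : (0:ℝ) ≤ (Real.sqrt (2*Real.pi))⁻¹ := by positivity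
  nlinarith
-- key lintegral computation
lemma lintegral_k_mul_k (z : ℝ) :
    ∫⁻ x, k x * k (z - x) = ENNReal.ofReal (phi (z / Real.sqrt 2) / Real.sqrt 2) := by
  rw [← integral_phi_mul_phi z,
    ofReal_integral_eq_lintegral_ofReal (integrable_phi_mul z)
      (Eventually.of_forall fun x => mul_nonneg (phi_nonneg x) (phi_nonneg _))]
  refine lintegral_congr fun x => ?_
  rw [k, k, ENNReal.ofReal_mul (phi_nonneg x)]

lemma key_lintegral (c : ℝ) :
    ∫⁻ t : ℝ, ENNReal.ofReal (Phi t * Phi (c - t)) =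
    ∫⁻ z : ℝ, ENNReal.ofReal (c - z) * ENNReal.ofReal (phi (z / Real.sqrt 2) / Real.sqrt 2) := by
  have hoPhi : Measurable fun t : ℝ => ENNReal.ofReal (Phi (c - t)) :=
    ENNReal.measurable_ofReal.comp (Phi_measurable.comp (measurable_const.sub measurable_id))
  calc
    ∫⁻ t : ℝ, ENNReal.ofReal (Phi t * Phi (c - t))
        = ∫⁻ t, (∫⁻ x, (Iic t).indicator k x) * ENNReal.ofReal (Phi (c - t)) := by
          refine lintegral_congr fun t => ?_
          rw [ENNReal.ofReal_mul (Phi_nonneg t), ofReal_Phi,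
            lintegral_indicator measurableSet_Iic]
    _ = ∫⁻ t, ∫⁻ x, (Iic t).indicator k x * ENNReal.ofReal (Phi (c - t)) := by
          refine lintegral_congr fun t => ?_
          rw [lintegral_mul_const'' _ ((k_meas.indicator measurableSet_Iic).aemeasurable)]
    _ = ∫⁻ x, ∫⁻ t, (Iic t).indicator k x * ENNReal.ofReal (Phi (c - t)) := by
          refine lintegral_lintegral_swap ?_
          have h1 : (fun p : ℝ × ℝ => (Iic p.1).indicator k p.2)
              = Set.indicator {q : ℝ × ℝ | q.2 ≤ q.1} (fun q => k q.2) := by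
            funext p; by_cases h : p.2 ≤ p.1 <;> simp [Set.indicator_apply, h]
          refine Measurable.aemeasurable ?_
          have hm1 : Measurable fun p : ℝ × ℝ => (Iic p.1).indicator k p.2 := by
            rw [h1]
            exact (k_meas.comp measurable_snd).indicator
              (measurableSet_le measurable_snd measurable_fst)
          exact hm1.mul (hoPhi.comp measurable_fst)
    _ = ∫⁻ x, k x * ∫⁻ t in Ici x, ENNReal.ofReal (Phi (c - t)) := by
          refine lintegral_congr fun x => ?_
          rw [← lintegral_indicator measurableSet_Ici,
            ← lintegral_const_mul'' _ ((hoPhi.indicator measurableSet_Ici).aemeasurable)]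
          refine lintegral_congr fun t => ?_
          by_cases h : x ≤ t
          · simp [Set.indicator_apply, h]
          · simp [Set.indicator_apply, h]
    _ = ∫⁻ x, k x * ∫⁻ t in Ici x, ∫⁻ y, (Iic (c - t)).indicator k y := by
          refine lintegral_congr fun x => ?_
          congr 1
          refine lintegral_congr fun t => ?_
          rw [ofReal_Phi, lintegral_indicator measurableSet_Iic]
    _ = ∫⁻ x, k x * ∫⁻ y, ∫⁻ t in Ici x, (Iic (c - t)).indicator k y := by
          refine lintegral_congr fun x => ?_
          congr 1
          refine lintegral_lintegral_swap ?_
          have h1 : Function.uncurry (fun t : ℝ => (Iic (c - t)).indicator k)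
              = Set.indicator {q : ℝ × ℝ | q.2 ≤ c - q.1} (fun q => k q.2) := by
            funext p
            by_cases h : p.2 ≤ c - p.1 <;>
              simp [Function.uncurry, Set.indicator_apply, h]
          refine Measurable.aemeasurable ?_
          rw [h1]
          exact (k_meas.comp measurable_snd).indicator
            (measurableSet_le measurable_snd (measurable_const.sub measurable_fst))
    _ = ∫⁻ x, k x * ∫⁻ y, k y * ENNReal.ofReal (c - y - x) := by
          refine lintegral_congr fun x => ?_
          congr 1
          refine lintegral_congr fun y => ?_
          have h1 : ∀ t : ℝ, (Iic (c - t)).indicator k y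
              = (Iic (c - y)).indicator (fun _ => k y) t := by
            intro t
            by_cases h : y ≤ c - t
            · rw [Set.indicator_of_mem (by simpa using h),
                Set.indicator_of_mem (by simp only [Set.mem_Iic]; linarith)]
            · rw [Set.indicator_of_notMem (by simpa using h),
                Set.indicator_of_notMem
                  (by simp only [Set.mem_Iic]; intro hh; exact h (by linarith))]
          simp_rw [h1]
          rw [lintegral_indicator measurableSet_Iic, Measure.restrict_restrict measurableSet_Iic,
            setLIntegral_const, Set.Iic_inter_Ici, Real.volume_Icc]
    _ = ∫⁻ x, k x * ∫⁻ z, k (z - x) * ENNReal.ofReal (c - z) := by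
          refine lintegral_congr fun x => ?_
          congr 1
          rw [← lintegral_add_right_eq_self (fun z => k (z - x) * ENNReal.ofReal (c - z)) x]
          refine lintegral_congr fun y => ?_
          simp only [add_sub_cancel_right]
          congr 2
          ring
    _ = ∫⁻ z, ∫⁻ x, k x * (k (z - x) * ENNReal.ofReal (c - z)) := by
          rw [← lintegral_lintegral_swap ?hm]
          case hm =>
            refine Measurable.aemeasurable ?_
            exact (k_meas.comp measurable_fst).mul
              ((k_meas.comp (measurable_snd.sub measurable_fst)).mul
                (ENNReal.measurable_ofReal.comp (measurable_const.sub measurable_snd)))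
          refine lintegral_congr fun x => ?_
          rw [lintegral_const_mul'' _ ?hm2]
          case hm2 =>
            exact ((k_meas.comp (measurable_id.sub measurable_const)).mul
              (ENNReal.measurable_ofReal.comp (measurable_const.sub measurable_id))).aemeasurable
    _ = ∫⁻ z, ENNReal.ofReal (c - z) * ∫⁻ x, k x * k (z - x) := by
          refine lintegral_congr fun z => ?_
          have hx : ∀ x : ℝ, k x * (k (z - x) * ENNReal.ofReal (c - z))
              = ENNReal.ofReal (c - z) * (k x * k (z - x)) := fun x => by ring
          simp_rw [hx]
          exact lintegral_const_mul'' _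
            ((k_meas.mul
              (k_meas.comp (measurable_const.sub measurable_id) :
                Measurable fun x : ℝ => k (z - x))).aemeasurable)
    _ = ∫⁻ z : ℝ, ENNReal.ofReal (c - z) * ENNReal.ofReal (phi (z / Real.sqrt 2) / Real.sqrt 2) := by
          refine lintegral_congr fun z => ?_
          rw [lintegral_k_mul_k]

lemma sqrt_two_pos : (0:ℝ) < Real.sqrt 2 := Real.sqrt_pos.mpr (by norm_num)

lemma integrable_rfun (c : ℝ) :
    Integrable (fun z : ℝ => (c - z) * (phi (z / Real.sqrt 2) / Real.sqrt 2)) := by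
  have h1 : Integrable (fun z : ℝ => Real.exp (-(1/4 : ℝ) * z^2)) :=
    integrable_exp_neg_mul_sq (by norm_num)
  have h2 : Integrable (fun z : ℝ => z * Real.exp (-(1/4 : ℝ) * z^2)) :=
    integrable_mul_exp_neg_mul_sq (by norm_num)
  have h3 := ((h1.const_mul c).sub h2).mul_const
    ((Real.sqrt (2*Real.pi))⁻¹ * (Real.sqrt 2)⁻¹)
  refine h3.congr (Eventually.of_forall fun z => ?_)
  simp only [Pi.sub_apply]
  rw [phi_comp_div_sqrt_two]
  have hq : -(1/4 : ℝ) * z^2 = -z^2/4 := by ring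
  rw [hq]
  field_simp

lemma hasDerivAt_F (c z : ℝ) :
    HasDerivAt (fun z : ℝ => c * Phi (z / Real.sqrt 2) + Real.sqrt 2 * phi (z / Real.sqrt 2))
      ((c - z) * (phi (z / Real.sqrt 2) / Real.sqrt 2)) z := by
  have h1 : HasDerivAt (fun z : ℝ => z / Real.sqrt 2) (1 / Real.sqrt 2) z := by
    simpa using (hasDerivAt_id z).div_const (Real.sqrt 2)
  have h2 := (hasDerivAt_Phi (z / Real.sqrt 2)).comp z h1
  have h3 := (hasDerivAt_phi (z / Real.sqrt 2)).comp z h1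
  have h4 := (h2.const_mul c).add (h3.const_mul (Real.sqrt 2))
  refine h4.congr_deriv ?_
  have hs : Real.sqrt 2 ≠ 0 := sqrt_two_pos.ne'
  have hss : Real.sqrt 2 * Real.sqrt 2 = 2 := Real.mul_self_sqrt (by norm_num)
  field_simp
  ring

lemma tendsto_F_atBot (c : ℝ) :
    Tendsto (fun z : ℝ => c * Phi (z / Real.sqrt 2) + Real.sqrt 2 * phi (z / Real.sqrt 2))
      atBot (nhds 0) := by
  have hdiv : Tendsto (fun z : ℝ => z / Real.sqrt 2) atBot atBot :=
    tendsto_id.atBot_div_const sqrt_two_pos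
  have h1 := (Phi_tendsto_atBot.comp hdiv).const_mul c
  have h2 := (phi_tendsto_atBot.comp hdiv).const_mul (Real.sqrt 2)
  have := h1.add h2
  simpa using this

lemma integral_q (c : ℝ) :
    ∫ z : ℝ, max (c - z) 0 * (phi (z / Real.sqrt 2) / Real.sqrt 2)
      = c * Phi (c / Real.sqrt 2) + Real.sqrt 2 * phi (c / Real.sqrt 2) := by
  have hind : (fun z : ℝ => max (c - z) 0 * (phi (z / Real.sqrt 2) / Real.sqrt 2))
      = (Iic c).indicator (fun z => (c - z) * (phi (z / Real.sqrt 2) / Real.sqrt 2)) := by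
    funext z
    by_cases h : z ≤ c
    · rw [Set.indicator_of_mem (by simpa using h), max_eq_left (by linarith)]
    · rw [Set.indicator_of_notMem (by simpa using h), max_eq_right (by linarith), zero_mul]
  rw [hind, integral_indicator measurableSet_Iic]
  rw [integral_Iic_of_hasDerivAt_of_tendsto' (fun z _ => hasDerivAt_F c z)
    ((integrable_rfun c).integrableOn) (tendsto_F_atBot c)]
  rw [sub_zero]

lemma q_integrable (c : ℝ) :
    Integrable (fun z : ℝ => max (c - z) 0 * (phi (z / Real.sqrt 2) / Real.sqrt 2)) := by
  refine (integrable_rfun c).mono ?_ (Eventually.of_forall fun z => ?_)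
  · refine Measurable.aestronglyMeasurable ?_
    exact ((measurable_const.sub measurable_id).max measurable_const).mul
      ((phi_continuous.measurable.comp (measurable_id.div_const _)).div_const _)
  · rw [Real.norm_eq_abs, Real.norm_eq_abs]
    have h0 : 0 ≤ phi (z / Real.sqrt 2) / Real.sqrt 2 :=
      div_nonneg (phi_nonneg _) sqrt_two_pos.le
    rw [abs_of_nonneg (mul_nonneg (le_max_right _ _) h0), abs_mul, abs_of_nonneg h0]
    exact mul_le_mul_of_nonneg_right (max_le (le_abs_self _) (abs_nonneg _)) h0

lemma key (c : ℝ) :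
    ∫ t : ℝ, Phi t * Phi (c - t)
      = c * Phi (c / Real.sqrt 2) + Real.sqrt 2 * phi (c / Real.sqrt 2) := by
  have hmeas : AEStronglyMeasurable (fun t : ℝ => Phi t * Phi (c - t)) volume :=
    (Phi_measurable.mul (Phi_measurable.comp (measurable_const.sub measurable_id))).aestronglyMeasurable
  rw [integral_eq_lintegral_of_nonneg_ae
    (Eventually.of_forall fun t => mul_nonneg (Phi_nonneg t) (Phi_nonneg _)) hmeas,
    key_lintegral c]
  have hpt : ∀ z : ℝ, ENNReal.ofReal (c - z) * ENNReal.ofReal (phi (z / Real.sqrt 2) / Real.sqrt 2)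
      = ENNReal.ofReal (max (c - z) 0 * (phi (z / Real.sqrt 2) / Real.sqrt 2)) := by
    intro z
    rw [ENNReal.ofReal_mul (le_max_right (c - z) 0)]
    congr 1
    rcases le_total 0 (c - z) with h|h
    · rw [max_eq_left h]
    · rw [max_eq_right h, ENNReal.ofReal_of_nonpos h, ENNReal.ofReal_zero]
  simp_rw [hpt]
  have hq0 : ∀ z : ℝ, 0 ≤ max (c - z) 0 * (phi (z / Real.sqrt 2) / Real.sqrt 2) :=
    fun z => mul_nonneg (le_max_right _ _) (div_nonneg (phi_nonneg _) sqrt_two_pos.le)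
  rw [← ofReal_integral_eq_lintegral_ofReal (q_integrable c) (Eventually.of_forall hq0),
    ENNReal.toReal_ofReal (integral_nonneg hq0)]
  exact integral_q c


theorem stmt8 (b d σ : ℝ) (hbd : b < d) (hσ : 0 < σ) :
    ∫ t : ℝ, Phi ((t - b) / σ) * Phi ((d - t) / σ) =
      (d - b) * Phi ((d - b) / (Real.sqrt 2 * σ)) +
        Real.sqrt 2 * σ * phi ((d - b) / (Real.sqrt 2 * σ)) := by
  set c : ℝ := (d - b) / σ with hc
  set g : ℝ → ℝ := fun u => Phi u * Phi (c - u) with hg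
  have h1 : ∀ t : ℝ, Phi ((t - b) / σ) * Phi ((d - t) / σ) = g ((t - b) * σ⁻¹) := by
    intro t
    simp only [hg]
    rw [← div_eq_mul_inv]
    congr 2
    rw [hc]
    field_simp
    ring
  have h2 : ∫ t : ℝ, Phi ((t - b) / σ) * Phi ((d - t) / σ)
      = ∫ t : ℝ, (fun s => g (s * σ⁻¹)) (t - b) := by
    simp only [h1]
  rw [h2, integral_sub_right_eq_self (fun s => g (s * σ⁻¹)) b,
    Measure.integral_comp_inv_mul_right g σ, hg]
  rw [key c, abs_of_pos hσ, smul_eq_mul]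
  have harg : c / Real.sqrt 2 = (d - b) / (Real.sqrt 2 * σ) := by
    rw [hc, div_div, mul_comm]
  rw [harg, mul_add]
  congr 1
  · rw [← mul_assoc, hc, mul_div_cancel₀ _ hσ.ne']
  · ring
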